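/- For every t ≥ 2 and every graph G with adjacency matrix A and n vertices, hom(K_{t,t}, G) ≥ ‖A‖_{q→t}^{t²}, where q = t/(t-1), hom(K_{t,t}, G) = Σ_{J∈[n]^t} (Σ_i Π_b a_{i,j_b})^t counts homomorphisms from K_{t,t} to G, and ‖A‖_{q→t} is the operator norm of A from ℓ^q to ℓ^t. -/

import Mathlib

open scoped Classical BigOperators

/-- Adjacency matrix of a simple graph on `Fin n`, with real entries. -/
noncomputable def adjMat {n : ℕ} (G : SimpleGraph (Fin n)) : Matrix (Fin n) (Fin n) ℝ :=
  fun i j => if G.Adj i j then 1 else 0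

/-- Spectral radius (largest real eigenvalue) of a real matrix. -/
noncomputable def specRad {α : Type*} [Fintype α] (A : Matrix α α ℝ) : ℝ :=
  sSup {μ : ℝ | ∃ x : α → ℝ, x ≠ 0 ∧ A.mulVec x = μ • x}

/-- The ℓ^p norm of a finitely supported real vector, for a real exponent `p`. -/
noncomputable def pNorm {α : Type*} [Fintype α] (p : ℝ) (x : α → ℝ) : ℝ :=
  (∑ i, |x i| ^ p) ^ (1 / p)

/-- The ℓ^p → ℓ^r operator norm of a real matrix. -/
noncomputable def opNorm {α β : Type*} [Fintype α] [Fintype β] (p r : ℝ)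
    (A : Matrix β α ℝ) : ℝ :=
  sSup {c : ℝ | ∃ x : α → ℝ, x ≠ 0 ∧ c = pNorm r (A.mulVec x) / pNorm p x}

/-- Operator-norm certificate for K_{t,t}: for every t ≥ 2 and every graph G with
adjacency matrix A, hom(K_{t,t}, G) = ∑_{J ∈ [n]^t} (∑_i ∏_b a_{i,J b})^t is at least
‖A‖_{q→t}^{t²} with q = t/(t-1). -/
theorem stmt0 (t : ℕ) (ht : 2 ≤ t) (n : ℕ) (G : SimpleGraph (Fin n)) :
    (∑ J : Fin t → Fin n, (∑ i, ∏ b, adjMat G i (J b)) ^ t)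
      ≥ opNorm ((t : ℝ) / ((t : ℝ) - 1)) (t : ℝ) (adjMat G) ^ (t ^ 2) := by
  set A := adjMat G with hA
  have hAnn : ∀ i j, 0 ≤ A i j := by
    intro i j; simp only [hA, adjMat]; positivity
  set T : ℝ := (t : ℝ) with hT
  have hT1 : 1 < T := by
    have : (2:ℝ) ≤ T := by rw [hT]; exact_mod_cast ht
    linarith
  have hT0 : 0 < T := by linarith
  set Q : ℝ := T / (T - 1) with hQ
  have hconj : T.HolderConjugate Q := Real.HolderConjugate.conjExponent hT1
  have hconj' : Q.HolderConjugate T := hconj.symm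
  have hQ0 : 0 < Q := hconj'.pos
  set S : (Fin t → Fin n) → ℝ := fun J => ∑ i, ∏ b, A i (J b) with hS
  have hSnn : ∀ J, 0 ≤ S J := by
    intro J; apply Finset.sum_nonneg; intro i _;
    exact Finset.prod_nonneg fun b _ => hAnn i (J b)
  set Hom : ℝ := ∑ J : Fin t → Fin n, S J ^ t with hHom
  have hHomnn : 0 ≤ Hom :=
    Finset.sum_nonneg fun J _ => pow_nonneg (hSnn J) t
  set M : ℝ := Hom ^ (((t:ℝ)^2)⁻¹) with hM
  have hMnn : 0 ≤ M := Real.rpow_nonneg hHomnn _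
  -- key claim
  have key : ∀ x : Fin n → ℝ, x ≠ 0 →
      pNorm T (A.mulVec x) / pNorm Q x ≤ M := by
    intro x hx
    set Sx : ℝ := ∑ j, |x j| ^ Q with hSx
    have hSxpos : 0 < Sx := by
      obtain ⟨j, hj⟩ := Function.ne_iff.1 hx
      have hj' : 0 < |x j| ^ Q := Real.rpow_pos_of_pos (abs_pos.2 hj) Q
      refine lt_of_lt_of_le hj' ?_
      exact Finset.single_le_sum (fun i _ => Real.rpow_nonneg (abs_nonneg _) Q)
        (Finset.mem_univ j)
    have hPQx : pNorm Q x = Sx ^ (1/Q) := rfl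
    have hPQpos : 0 < pNorm Q x := by
      rw [hPQx]; exact Real.rpow_pos_of_pos hSxpos _
    -- the main estimate: N ≤ Sx^(T/Q) * Hom^(1/T)
    set N : ℝ := ∑ i, |A.mulVec x i| ^ T with hN
    have step1 : N ≤ ∑ J : Fin t → Fin n, (∏ b, |x (J b)|) * S J := by
      calc N ≤ ∑ i, (∑ j, A i j * |x j|) ^ T := by
              apply Finset.sum_le_sum; intro i _
              apply Real.rpow_le_rpow (abs_nonneg _) _ (le_of_lt hT0)
              calc |A.mulVec x i| = |∑ j, A i j * x j| := rfl
                _ ≤ ∑ j, |A i j * x j| := Finset.abs_sum_le_sum_abs _ _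
                _ = ∑ j, A i j * |x j| := by
                    apply Finset.sum_congr rfl; intro j _
                    rw [abs_mul, abs_of_nonneg (hAnn i j)]
        _ = ∑ i, (∑ j, A i j * |x j|) ^ t := by
              apply Finset.sum_congr rfl; intro i _
              exact Real.rpow_natCast _ t
        _ = ∑ i, ∑ J : Fin t → Fin n, ∏ b, A i (J b) * |x (J b)| := by
              apply Finset.sum_congr rfl; intro i _
              exact Fintype.sum_pow (fun j => A i j * |x j|) t
        _ = ∑ J : Fin t → Fin n, ∑ i, ∏ b, A i (J b) * |x (J b)| :=
              Finset.sum_comm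
        _ = ∑ J : Fin t → Fin n, (∏ b, |x (J b)|) * S J := by
              apply Finset.sum_congr rfl; intro J _
              rw [hS, Finset.mul_sum]
              apply Finset.sum_congr rfl; intro i _
              rw [Finset.prod_mul_distrib, mul_comm]
    have step2 : ∑ J : Fin t → Fin n, (∏ b, |x (J b)|) * S J ≤
        Sx ^ (T * (1/Q)) * Hom ^ (1/T) := by
      have holder := Real.inner_le_Lp_mul_Lq_of_nonneg Finset.univ hconj'
        (f := fun J : Fin t → Fin n => ∏ b, |x (J b)|) (g := S)
        (fun J _ => Finset.prod_nonneg fun b _ => abs_nonneg _)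
        (fun J _ => hSnn J)
      refine holder.trans (le_of_eq ?_)
      congr 1
      · have e1 : ∀ J : Fin t → Fin n, (∏ b, |x (J b)|) ^ Q = ∏ b, |x (J b)| ^ Q := by
          intro J
          exact (Real.finset_prod_rpow Finset.univ _ (fun b _ => abs_nonneg _) Q).symm
        rw [Finset.sum_congr rfl (fun J _ => e1 J)]
        rw [← Fintype.sum_pow (fun j => |x j| ^ Q) t]
        rw [← hSx, ← Real.rpow_natCast Sx t, ← Real.rpow_mul (le_of_lt hSxpos), ← hT]
      · congr 1
        apply Finset.sum_congr rfl; intro J _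
        exact Real.rpow_natCast _ t
    have hNle : N ≤ Sx ^ (T * (1/Q)) * Hom ^ (1/T) := step1.trans step2
    have hNnn : 0 ≤ N :=
      Finset.sum_nonneg fun i _ => Real.rpow_nonneg (abs_nonneg _) _
    have hPT : pNorm T (A.mulVec x) = N ^ (1/T) := rfl
    have final : pNorm T (A.mulVec x) ≤ pNorm Q x * M := by
      rw [hPT, hPQx, hM]
      calc N ^ (1/T) ≤ (Sx ^ (T * (1/Q)) * Hom ^ (1/T)) ^ (1/T) := by
            apply Real.rpow_le_rpow hNnn hNle
            positivity
        _ = Sx ^ (1/Q) * Hom ^ (((t:ℝ)^2)⁻¹) := by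
            rw [Real.mul_rpow (Real.rpow_nonneg (le_of_lt hSxpos) _)
              (Real.rpow_nonneg hHomnn _)]
            rw [← Real.rpow_mul (le_of_lt hSxpos), ← Real.rpow_mul hHomnn]
            congr 1
            · congr 1; field_simp
            · congr 1; rw [← hT]; field_simp
      done
    rw [div_le_iff₀ hPQpos]
    linarith [final, mul_comm (pNorm Q x) M]
  -- conclude
  have hub : ∀ c ∈ {c : ℝ | ∃ x : Fin n → ℝ, x ≠ 0 ∧
      c = pNorm Q (A.mulVec x) / pNorm Q x}, True := fun _ _ => trivial
  have hople : opNorm Q T A ≤ M := by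
    apply Real.sSup_le _ hMnn
    rintro c ⟨x, hx, rfl⟩
    exact key x hx
  have hopnn : 0 ≤ opNorm Q T A := by
    rcases Set.eq_empty_or_nonempty
      {c : ℝ | ∃ x : Fin n → ℝ, x ≠ 0 ∧ c = pNorm T (A.mulVec x) / pNorm Q x} with he | ⟨c, hc⟩
    · unfold opNorm; rw [he, Real.sSup_empty]
    · have hbdd : BddAbove {c : ℝ | ∃ x : Fin n → ℝ, x ≠ 0 ∧
          c = pNorm T (A.mulVec x) / pNorm Q x} := by
        refine ⟨M, ?_⟩; rintro c ⟨x, hx, rfl⟩; exact key x hx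
      obtain ⟨x, hx, rfl⟩ := hc
      have h0 : 0 ≤ pNorm T (A.mulVec x) / pNorm Q x := by
        apply div_nonneg <;> exact Real.rpow_nonneg
          (Finset.sum_nonneg fun i _ => Real.rpow_nonneg (abs_nonneg _) _) _
      exact h0.trans (le_csSup hbdd ⟨x, hx, rfl⟩)
  have ht2 : ((t:ℝ)^2) ≠ 0 := by positivity
  calc opNorm Q T A ^ (t ^ 2) ≤ M ^ (t ^ 2) := pow_le_pow_left₀ hopnn hople _
    _ = Hom := by
        rw [hM, ← Real.rpow_natCast (Hom ^ (((t:ℝ)^2)⁻¹)) (t^2),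
          ← Real.rpow_mul hHomnn]
        push_cast
        rw [inv_mul_cancel₀ ht2, Real.rpow_one]
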